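/- If s : ℝⁿ × ℝ → ℝ is twice continuously differentiable and satisfies the Hamilton–Jacobi equation ∂s/∂t + ½‖∇s‖² = c for a constant c at all points, then any curve X : ℝ → ℝⁿ satisfying Ẋ(t) = ∇s(X(t), t) has zero acceleration: Ẍ(t) = 0 for all t. -/

import Mathlib

open InnerProductSpace ContinuousLinearMap

theorem zero_accel_aux {E : Type*} [NormedAddCommGroup E] [InnerProductSpace ℝ E]
    [CompleteSpace E]
    (s : E → ℝ → ℝ) (c : ℝ)
    (hs : ContDiff ℝ 2 (fun p : E × ℝ => s p.1 p.2))
    (hHJ : ∀ (x : E) (t : ℝ),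
      deriv (fun τ => s x τ) t
        + (1 / 2) * ‖gradient (fun y => s y t) x‖ ^ 2 = c)
    (X : ℝ → E)
    (hX : ∀ t, HasDerivAt X (gradient (fun y => s y t) (X t)) t) :
    ∀ t, HasDerivAt (fun τ => gradient (fun y => s y τ) (X τ)) (0 : E) t := by
  classical
  set f : E × ℝ → ℝ := fun p => s p.1 p.2 with hfdef
  have hf2 : ContDiff ℝ 2 f := hs
  have hf1 : Differentiable ℝ f := hf2.differentiable two_ne_zero
  have hfd : ContDiff ℝ 1 (fun p => fderiv ℝ f p) := hf2.fderiv_right (by norm_num)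
  have hfd1 : Differentiable ℝ (fun p => fderiv ℝ f p) := hfd.differentiable one_ne_zero
  set F2 : (E × ℝ) → (E × ℝ) →L[ℝ] (E × ℝ) →L[ℝ] ℝ :=
    fun p => fderiv ℝ (fderiv ℝ f) p with hF2def
  have hF2 : ∀ p, HasFDerivAt (fderiv ℝ f) (F2 p) p := fun p => (hfd1 p).hasFDerivAt
  have hsymm : ∀ p v w, F2 p v w = F2 p w v := fun p =>
    second_derivative_symmetric (fun y => (hf1 y).hasFDerivAt) (hF2 p)
  set ι : E →L[ℝ] E × ℝ := ContinuousLinearMap.inl ℝ E ℝ with hι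
  set Φ : ((E × ℝ) →L[ℝ] ℝ) →L[ℝ] E :=
    ((toDual ℝ E).symm.toContinuousLinearEquiv.toContinuousLinearMap).comp
      ((ContinuousLinearMap.compL ℝ E (E × ℝ) ℝ).flip ι) with hΦdef
  have hΦ : ∀ L : (E × ℝ) →L[ℝ] ℝ, Φ L = (toDual ℝ E).symm (L.comp ι) := fun L => rfl
  have hΦinner : ∀ (L : (E × ℝ) →L[ℝ] ℝ) (u : E),
      (inner ℝ (Φ L) u : ℝ) = L (u, 0) := by
    intro L u
    rw [hΦ, toDual_symm_apply]
    simp [hι]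
  -- gradient in terms of Φ and fderiv of f
  have hgrad : ∀ (x : E) (t : ℝ),
      gradient (fun y => s y t) x = Φ (fderiv ℝ f (x, t)) := by
    intro x t
    have h1 : HasFDerivAt (fun y : E => (y, t)) ι x :=
      (hasFDerivAt_id x).prodMk (hasFDerivAt_const t x)
    have h2 : HasFDerivAt (fun y => s y t) ((fderiv ℝ f (x, t)).comp ι) x :=
      by have := ((hf1 (x, t)).hasFDerivAt).comp x h1; exact this
    rw [gradient, h2.fderiv, hΦ]
  -- the map p ↦ Φ (fderiv f p) is differentiable
  have hΦd : ∀ L : (E × ℝ) →L[ℝ] ℝ, HasFDerivAt (𝕜 := ℝ) (⇑Φ) Φ L := by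
    intro L; fun_prop
  have hG : ∀ p : E × ℝ, HasFDerivAt (fun q => Φ (fderiv ℝ f q)) (Φ.comp (F2 p)) p :=
    fun p => HasFDerivAt.comp (𝕜 := ℝ) (F := (E × ℝ) →L[ℝ] ℝ) p (hΦd _) (hF2 p)
  -- the Hamilton-Jacobi relation for H
  have hHc : ∀ p : E × ℝ, (fderiv ℝ f p (0, 1) + fderiv ℝ f p (0, 1))
      + (inner ℝ (Φ (fderiv ℝ f p)) (Φ (fderiv ℝ f p)) : ℝ) = 2 * c := by
    rintro ⟨x, t⟩
    have h3 : HasDerivAt (fun τ => ((x, τ) : E × ℝ)) (0, 1) t :=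
      (hasDerivAt_const t x).prodMk (hasDerivAt_id t)
    have hd : HasDerivAt (fun τ => s x τ) (fderiv ℝ f (x, t) (0, 1)) t :=
      (hf1 (x, t)).hasFDerivAt.comp_hasDerivAt t h3
    have hh := hHJ x t
    rw [hd.deriv] at hh
    rw [real_inner_self_eq_norm_sq, ← hgrad]
    linarith
  -- differentiate H
  intro t₀
  set p₀ : E × ℝ := (X t₀, t₀) with hp₀
  set v : E := Φ (fderiv ℝ f p₀) with hv
  set ev : ((E × ℝ) →L[ℝ] ℝ) →L[ℝ] ℝ :=
    ContinuousLinearMap.apply ℝ ℝ (((0 : E), (1 : ℝ)) : E × ℝ) with hev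
  have key : ∀ (p : E × ℝ) (w : E × ℝ),
      F2 p w (Φ (fderiv ℝ f p), 1) = 0 := by
    intro p w
    have hevd : ∀ L : (E × ℝ) →L[ℝ] ℝ, HasFDerivAt (𝕜 := ℝ) (⇑ev) ev L := by
      intro L; fun_prop
    have h1 : HasFDerivAt (fun q => fderiv ℝ f q (0, 1)) (ev.comp (F2 p)) p :=
      HasFDerivAt.comp (𝕜 := ℝ) (F := (E × ℝ) →L[ℝ] ℝ) p (hevd _) (hF2 p)
    have h2 : HasFDerivAt (fun q : E × ℝ => (inner ℝ (Φ (fderiv ℝ f q)) (Φ (fderiv ℝ f q)) : ℝ))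
        ((fderivInnerCLM ℝ (Φ (fderiv ℝ f p), Φ (fderiv ℝ f p))).comp
          ((Φ.comp (F2 p)).prod (Φ.comp (F2 p)))) p :=
      (hG p).inner ℝ (hG p)
    have h12 : HasFDerivAt (fun q => fderiv ℝ f q (0, 1) + fderiv ℝ f q (0, 1))
        (ev.comp (F2 p) + ev.comp (F2 p)) p := h1.add h1
    have hH' : HasFDerivAt
        (fun q => (fderiv ℝ f q (0, 1) + fderiv ℝ f q (0, 1))
          + (inner ℝ (Φ (fderiv ℝ f q)) (Φ (fderiv ℝ f q)) : ℝ))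
        ((ev.comp (F2 p) + ev.comp (F2 p)) +
          ((fderivInnerCLM ℝ (Φ (fderiv ℝ f p), Φ (fderiv ℝ f p))).comp
            ((Φ.comp (F2 p)).prod (Φ.comp (F2 p))))) p := h12.add h2
    have hH0 : HasFDerivAt
        (fun q => (fderiv ℝ f q (0, 1) + fderiv ℝ f q (0, 1))
          + (inner ℝ (Φ (fderiv ℝ f q)) (Φ (fderiv ℝ f q)) : ℝ))
        (0 : (E × ℝ) →L[ℝ] ℝ) p := by
      have hHeq : (fun q : E × ℝ => (fderiv ℝ f q (0, 1) + fderiv ℝ f q (0, 1))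
          + (inner ℝ (Φ (fderiv ℝ f q)) (Φ (fderiv ℝ f q)) : ℝ)) = fun _ => 2 * c :=
        funext hHc
      rw [hHeq]
      exact hasFDerivAt_const (2 * c) p
    have heq := hH'.unique hH0
    have hw := congrFun (congrArg (fun L : (E × ℝ) →L[ℝ] ℝ => (L : (E × ℝ) → ℝ)) heq) w
    simp only [ContinuousLinearMap.add_apply, ContinuousLinearMap.coe_smul',
      Pi.smul_apply, ContinuousLinearMap.comp_apply, fderivInnerCLM_apply,
      ContinuousLinearMap.prod_apply, ContinuousLinearMap.zero_apply, hev,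
      ContinuousLinearMap.apply_apply, smul_eq_mul] at hw
    rw [real_inner_comm (Φ (fderiv ℝ f p)) (Φ (F2 p w))] at hw
    have hw' : F2 p w (0, 1) + (inner ℝ (Φ (F2 p w)) (Φ (fderiv ℝ f p)) : ℝ) = 0 := by
      rw [real_inner_comm]
      linarith
    rw [hΦinner] at hw'
    have hsum : ((Φ (fderiv ℝ f p), 0) : E × ℝ) + ((0, 1) : E × ℝ)
        = (Φ (fderiv ℝ f p), 1) := by simp
    rw [← hsum, map_add]
    linarith
  -- combine
  have hc : HasDerivAt (fun τ => ((X τ, τ) : E × ℝ)) (v, 1) t₀ := by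
    have hcc := (hX t₀).prodMk (hasDerivAt_id t₀)
    rwa [hgrad] at hcc
  have hmain : HasDerivAt (fun τ => Φ (fderiv ℝ f (X τ, τ))) ((Φ.comp (F2 p₀)) (v, 1)) t₀ := by
    exact HasFDerivAt.comp_hasDerivAt (f := fun τ => ((X τ, τ) : E × ℝ)) t₀ (hG p₀) hc
  have hzero : (Φ.comp (F2 p₀)) (v, 1) = 0 := by
    rw [ContinuousLinearMap.comp_apply, hΦ]
    have hz : (F2 p₀ (v, 1)).comp ι = 0 := by
      ext u
      simp only [ContinuousLinearMap.comp_apply, ContinuousLinearMap.zero_apply, hι,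
        ContinuousLinearMap.inl_apply]
      rw [hsymm p₀ (v, 1) (u, 0)]
      exact key p₀ (u, 0)
    rw [hz, map_zero]
  rw [hzero] at hmain
  have hfun : (fun τ => gradient (fun y => s y τ) (X τ)) = fun τ => Φ (fderiv ℝ f (X τ, τ)) :=
    funext fun τ => hgrad (X τ) τ
  rw [hfun]
  exact hmain

/-- If `s : ℝⁿ × ℝ → ℝ` is C² and satisfies the Hamilton–Jacobi equation
`∂s/∂t + ½‖∇s‖² = c` for a constant `c`, then any curve `X` with
`Ẋ(t) = ∇s(X(t), t)` has zero acceleration: `Ẍ(t) = 0` for all `t`. -/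
theorem zero_acceleration_of_hamilton_jacobi {n : ℕ}
    (s : EuclideanSpace ℝ (Fin n) → ℝ → ℝ) (c : ℝ)
    (hs : ContDiff ℝ 2 (fun p : EuclideanSpace ℝ (Fin n) × ℝ => s p.1 p.2))
    (hHJ : ∀ (x : EuclideanSpace ℝ (Fin n)) (t : ℝ),
      deriv (fun τ => s x τ) t
        + (1 / 2) * ‖gradient (fun y => s y t) x‖ ^ 2 = c)
    (X : ℝ → EuclideanSpace ℝ (Fin n))
    (hX : ∀ t, HasDerivAt X (gradient (fun y => s y t) (X t)) t) :
    ∀ t, HasDerivAt (fun τ => gradient (fun y => s y τ) (X τ))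
      (0 : EuclideanSpace ℝ (Fin n)) t :=
  zero_accel_aux s c hs hHJ X hX
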